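/- Let V be a finite-dimensional complex vector space, σ : V ⊗ V → V ⊗ V an involutive braiding (σ² = 1, braid equation), S = ker(σ - 1), and g a non-degenerate bilinear form on V such that g ∘ σ = g and such that σ is g⁽²⁾-self-adjoint. Then the map Φ : Hom(V, S) → Hom(S, V), Φ(L) = (id ⊗ g)(L ⊗ id)|_S, is a linear isomorphism. -/

import Mathlib

open scoped TensorProduct

/-- `σ ⊗ id` on `(V ⊗ V) ⊗ V`. -/
noncomputable def sigma12 {V : Type} [AddCommGroup V] [Module ℂ V]
    (σ : Module.End ℂ (V ⊗[ℂ] V)) : Module.End ℂ ((V ⊗[ℂ] V) ⊗[ℂ] V) :=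
  TensorProduct.map σ LinearMap.id

/-- `id ⊗ σ` on `(V ⊗ V) ⊗ V`, acting on the last two tensor factors. -/
noncomputable def sigma23 {V : Type} [AddCommGroup V] [Module ℂ V]
    (σ : Module.End ℂ (V ⊗[ℂ] V)) : Module.End ℂ ((V ⊗[ℂ] V) ⊗[ℂ] V) :=
  (TensorProduct.assoc ℂ V V V).symm.toLinearMap ∘ₗ
    (TensorProduct.map LinearMap.id σ) ∘ₗ (TensorProduct.assoc ℂ V V V).toLinearMap

/-- The contraction `(id ⊗ g) : (V ⊗ V) ⊗ V → V`, `(v ⊗ w) ⊗ u ↦ g(w ⊗ u) • v`. -/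
noncomputable def contract {V : Type} [AddCommGroup V] [Module ℂ V]
    (g : V ⊗[ℂ] V →ₗ[ℂ] ℂ) : (V ⊗[ℂ] V) ⊗[ℂ] V →ₗ[ℂ] V :=
  (TensorProduct.rid ℂ V).toLinearMap ∘ₗ (TensorProduct.map LinearMap.id g) ∘ₗ
    (TensorProduct.assoc ℂ V V V).toLinearMap

section Aux

variable {n : ℕ} {V : Type} [AddCommGroup V] [Module ℂ V]

lemma contract_tmul (g : V ⊗[ℂ] V →ₗ[ℂ] ℂ) (a c u : V) :
    contract g ((a ⊗ₜ[ℂ] c) ⊗ₜ[ℂ] u) = g (c ⊗ₜ[ℂ] u) • a := by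
  simp [contract]

lemma g_expand (b : Module.Basis (Fin n) ℂ V) (g : V ⊗[ℂ] V →ₗ[ℂ] ℂ) (x e : V) :
    g (x ⊗ₜ[ℂ] e) = ∑ i, b.repr x i * g (b i ⊗ₜ[ℂ] e) := by
  conv_lhs => rw [← b.sum_repr x]
  rw [TensorProduct.sum_tmul, map_sum]
  refine Finset.sum_congr rfl fun i _ => ?_
  rw [← TensorProduct.smul_tmul', map_smul, smul_eq_mul]

lemma g_nondeg (b : Module.Basis (Fin n) ℂ V) (g : V ⊗[ℂ] V →ₗ[ℂ] ℂ)
    (hG : IsUnit (Matrix.of fun i j => g (b i ⊗ₜ[ℂ] b j)))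
    (x : V) (hx : ∀ e : V, g (x ⊗ₜ[ℂ] e) = 0) : x = 0 := by
  obtain ⟨B, hB⟩ := hG.exists_right_inv
  have hv : Matrix.vecMul (fun i => b.repr x i)
      (Matrix.of fun i j => g (b i ⊗ₜ[ℂ] b j)) = 0 := by
    funext j
    have h1 := hx (b j)
    rw [g_expand b g] at h1
    simpa [Matrix.vecMul, dotProduct] using h1
  have hv0 : (fun i => b.repr x i) = 0 := by
    have h2 := congrArg (fun v => Matrix.vecMul v B) hv
    simpa [Matrix.vecMul_vecMul, hB] using h2
  have hr : b.repr x = 0 := Finsupp.ext fun i => congrFun hv0 i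
  exact b.repr.map_eq_zero_iff.mp hr

lemma contract_nondeg (b : Module.Basis (Fin n) ℂ V) (g : V ⊗[ℂ] V →ₗ[ℂ] ℂ)
    (hG : IsUnit (Matrix.of fun i j => g (b i ⊗ₜ[ℂ] b j)))
    (x : V ⊗[ℂ] V) (hx : ∀ d : V, contract g (x ⊗ₜ[ℂ] d) = 0) : x = 0 := by
  obtain ⟨B, hB⟩ := hG.exists_right_inv
  set T : Module.Basis (Fin n × Fin n) ℂ (V ⊗[ℂ] V) := Module.Basis.tensorProduct b b with hT
  have key : ∀ (y : V ⊗[ℂ] V) (k i : Fin n),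
      b.repr (contract g (y ⊗ₜ[ℂ] b k)) i
        = ∑ j, T.repr y (i, j) * g (b j ⊗ₜ[ℂ] b k) := by
    intro y k
    induction y using TensorProduct.induction_on with
    | zero => intro i; simp [TensorProduct.zero_tmul]
    | tmul a c =>
        intro i
        rw [contract_tmul]
        simp only [map_smul, Finsupp.smul_apply, smul_eq_mul]
        rw [g_expand b g c (b k), Finset.sum_mul]
        refine Finset.sum_congr rfl fun j _ => ?_
        simp only [hT, Module.Basis.tensorProduct_repr_tmul_apply, smul_eq_mul]
        ring
    | add y z hy hz =>
        intro i
        simp only [TensorProduct.add_tmul, map_add, Finsupp.add_apply, hy, hz]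
        rw [← Finset.sum_add_distrib]
        exact Finset.sum_congr rfl fun j _ => by ring
  set M : Matrix (Fin n) (Fin n) ℂ := Matrix.of fun i j => T.repr x (i, j) with hM
  set G : Matrix (Fin n) (Fin n) ℂ := Matrix.of fun i j => g (b i ⊗ₜ[ℂ] b j) with hGdef
  have hMG : M * G = 0 := by
    ext i k
    have h1 := key x k i
    rw [hx (b k)] at h1
    simp only [map_zero, Finsupp.coe_zero, Pi.zero_apply] at h1
    simpa [Matrix.mul_apply, hM, hGdef] using h1.symm
  have hM0 : M = 0 := by
    calc M = M * (G * B) := by rw [hB, Matrix.mul_one]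
      _ = (M * G) * B := (Matrix.mul_assoc M G B).symm
      _ = 0 := by rw [hMG, Matrix.zero_mul]
  have hrepr : T.repr x = 0 := by
    refine Finsupp.ext fun p => ?_
    have h3 := congrFun (congrFun hM0 p.1) p.2
    simpa [hM] using h3
  exact T.repr.map_eq_zero_iff.mp hrepr

/-- The linearized version of the map in the statement. -/
noncomputable def PhiAux (σ : Module.End ℂ (V ⊗[ℂ] V)) (g : V ⊗[ℂ] V →ₗ[ℂ] ℂ) :
    (V →ₗ[ℂ] ↥(LinearMap.ker (σ - 1))) →ₗ[ℂ] (↥(LinearMap.ker (σ - 1)) →ₗ[ℂ] V) where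
  toFun M := (contract g ∘ₗ
      TensorProduct.map ((LinearMap.ker (σ - 1)).subtype ∘ₗ M) LinearMap.id) ∘ₗ
      (LinearMap.ker (σ - 1)).subtype
  map_add' M M' := by
    have h : (LinearMap.ker (σ - 1)).subtype ∘ₗ (M + M')
        = (LinearMap.ker (σ - 1)).subtype ∘ₗ M + (LinearMap.ker (σ - 1)).subtype ∘ₗ M' := by
      ext v; simp
    refine LinearMap.ext fun x => ?_
    simp [h, TensorProduct.map_add_left, LinearMap.add_comp, LinearMap.comp_add,
      LinearMap.add_apply]
  map_smul' c M := by
    have h : (LinearMap.ker (σ - 1)).subtype ∘ₗ (c • M)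
        = c • ((LinearMap.ker (σ - 1)).subtype ∘ₗ M) := by
      ext v; simp
    refine LinearMap.ext fun x => ?_
    simp [h, TensorProduct.map_smul_left, LinearMap.smul_comp, LinearMap.comp_smul,
      LinearMap.smul_apply]

lemma PhiAux_apply (σ : Module.End ℂ (V ⊗[ℂ] V)) (g : V ⊗[ℂ] V →ₗ[ℂ] ℂ)
    (M : V →ₗ[ℂ] ↥(LinearMap.ker (σ - 1))) :
    PhiAux σ g M = (contract g ∘ₗ
      TensorProduct.map ((LinearMap.ker (σ - 1)).subtype ∘ₗ M) LinearMap.id) ∘ₗ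
      (LinearMap.ker (σ - 1)).subtype := rfl

end Aux

/-- For an involutive braiding `σ` with `S = ker (σ - 1)` and a non-degenerate `σ`-invariant
bilinear form `g` whose braiding is `g⁽²⁾`-self-adjoint, the map
`Φ : Hom(V, S) → Hom(S, V)`, `Φ(L) = (id ⊗ g)(L ⊗ id)|_S`, is a linear isomorphism. -/
theorem stmt16 {n : ℕ} {V : Type} [AddCommGroup V] [Module ℂ V]
    (b : Module.Basis (Fin n) ℂ V)
    (σ : Module.End ℂ (V ⊗[ℂ] V))
    (hinv : σ * σ = 1)
    (hbraid : sigma12 σ * sigma23 σ * sigma12 σ = sigma23 σ * sigma12 σ * sigma23 σ)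
    (g : V ⊗[ℂ] V →ₗ[ℂ] ℂ)
    (hG : IsUnit (Matrix.of fun i j => g (b i ⊗ₜ[ℂ] b j)))
    (hgσ : ∀ x : V ⊗[ℂ] V, g (σ x) = g x)
    (g2 : (V ⊗[ℂ] V) ⊗[ℂ] (V ⊗[ℂ] V) →ₗ[ℂ] ℂ)
    (hg2 : ∀ a c d e : V,
      g2 ((a ⊗ₜ[ℂ] c) ⊗ₜ[ℂ] (d ⊗ₜ[ℂ] e)) = g (c ⊗ₜ[ℂ] d) * g (a ⊗ₜ[ℂ] e))
    (hsa : ∀ x y : V ⊗[ℂ] V, g2 (σ x ⊗ₜ[ℂ] y) = g2 (x ⊗ₜ[ℂ] σ y)) :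
    Function.Bijective
      (fun L : {L : V →ₗ[ℂ] V ⊗[ℂ] V // ∀ v, L v ∈ LinearMap.ker (σ - 1)} =>
        (contract g ∘ₗ TensorProduct.map L.1 LinearMap.id) ∘ₗ
          (LinearMap.ker (σ - 1)).subtype) := by
  classical
  haveI : Module.Finite ℂ V := Module.Finite.of_basis b
  set S : Submodule ℂ (V ⊗[ℂ] V) := LinearMap.ker (σ - 1) with hSdef
  have hσσ : ∀ x : V ⊗[ℂ] V, σ (σ x) = x := by
    intro x
    have h := congrArg (fun f : Module.End ℂ (V ⊗[ℂ] V) => f x) hinv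
    simpa [Module.End.mul_apply] using h
  -- Injectivity
  have hinj : Function.Injective (PhiAux σ g) := by
    rw [injective_iff_map_eq_zero]
    intro M hM0
    set L : V →ₗ[ℂ] V ⊗[ℂ] V := S.subtype ∘ₗ M with hLdef
    have hLS : ∀ v, σ (L v) = L v := by
      intro v
      have hv : L v ∈ S := (M v).2
      rw [hSdef, LinearMap.mem_ker] at hv
      have h : σ (L v) - L v = 0 := by
        simpa [LinearMap.sub_apply] using hv
      exact sub_eq_zero.mp h
    set C : V ⊗[ℂ] V →ₗ[ℂ] V := contract g ∘ₗ TensorProduct.map L LinearMap.id with hCdef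
    have hC0 : ∀ x ∈ S, C x = 0 := by
      intro x hx
      have h := DFunLike.congr_fun hM0 (⟨x, hx⟩ : S)
      rw [PhiAux_apply] at h
      simpa [hCdef, hLdef] using h
    have hmemP : ∀ x : V ⊗[ℂ] V, x + σ x ∈ S := by
      intro x
      rw [hSdef, LinearMap.mem_ker]
      simp only [LinearMap.sub_apply, Module.End.one_apply, map_add, hσσ x]
      abel
    have hCσ : ∀ x, C (σ x) = - C x := by
      intro x
      have h1 : C (x + σ x) = 0 := hC0 _ (hmemP x)
      rw [map_add, add_comm] at h1
      exact eq_neg_of_add_eq_zero_left h1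
    set F : (V ⊗[ℂ] V) ⊗[ℂ] V →ₗ[ℂ] ℂ := g ∘ₗ TensorProduct.map C LinearMap.id with hFdef
    have hFtmul : ∀ (x : V ⊗[ℂ] V) (e : V), F (x ⊗ₜ[ℂ] e) = g (C x ⊗ₜ[ℂ] e) := by
      intro x e
      simp [hFdef, TensorProduct.map_tmul]
    have h12 : ∀ z, F (sigma12 σ z) = - F z := by
      have hm : F ∘ₗ sigma12 σ = - F := by
        apply TensorProduct.ext'
        intro x e
        simp only [LinearMap.comp_apply, sigma12, TensorProduct.map_tmul,
          LinearMap.id_coe, id_eq, LinearMap.neg_apply]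
        rw [hFtmul, hFtmul, hCσ, TensorProduct.neg_tmul, map_neg]
      intro z
      have h := DFunLike.congr_fun hm z
      simpa using h
    have Klem : ∀ (x : V ⊗[ℂ] V) (d e : V),
        g (contract g (x ⊗ₜ[ℂ] d) ⊗ₜ[ℂ] e) = g2 (x ⊗ₜ[ℂ] (d ⊗ₜ[ℂ] e)) := by
      intro x d e
      induction x using TensorProduct.induction_on with
      | zero => simp [TensorProduct.zero_tmul]
      | tmul a c =>
          rw [contract_tmul, ← TensorProduct.smul_tmul', map_smul, smul_eq_mul, hg2]
      | add y z hy hz =>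
          simp only [TensorProduct.add_tmul, map_add, TensorProduct.add_tmul, hy, hz]
    have F2 : ∀ (v : V) (y : V ⊗[ℂ] V),
        F ((TensorProduct.assoc ℂ V V V).symm (v ⊗ₜ[ℂ] y)) = g2 (L v ⊗ₜ[ℂ] y) := by
      intro v y
      induction y using TensorProduct.induction_on with
      | zero => simp [TensorProduct.tmul_zero]
      | tmul d e =>
          rw [TensorProduct.assoc_symm_tmul, hFtmul]
          have hCv : C (v ⊗ₜ[ℂ] d) = contract g (L v ⊗ₜ[ℂ] d) := by
            simp [hCdef, TensorProduct.map_tmul]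
          rw [hCv, Klem]
      | add y z hy hz =>
          simp only [TensorProduct.tmul_add, map_add, hy, hz]
    have h23 : ∀ z, F (sigma23 σ z) = F z := by
      intro z
      induction z using TensorProduct.induction_on with
      | zero => simp
      | tmul x e =>
          induction x using TensorProduct.induction_on with
          | zero => simp [TensorProduct.zero_tmul]
          | tmul v d =>
              have hstep : sigma23 σ ((v ⊗ₜ[ℂ] d) ⊗ₜ[ℂ] e)
                  = (TensorProduct.assoc ℂ V V V).symm (v ⊗ₜ[ℂ] σ (d ⊗ₜ[ℂ] e)) := by
                simp [sigma23, TensorProduct.assoc_tmul, TensorProduct.map_tmul]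
              rw [hstep, F2, ← hsa, hLS, ← F2, TensorProduct.assoc_symm_tmul]
          | add y z hy hz =>
              simp only [TensorProduct.add_tmul, map_add, hy, hz]
      | add y z hy hz => simp only [map_add, hy, hz]
    have hb' : ∀ z, sigma12 σ (sigma23 σ (sigma12 σ z)) = sigma23 σ (sigma12 σ (sigma23 σ z)) := by
      intro z
      have h := congrArg (fun f : Module.End ℂ ((V ⊗[ℂ] V) ⊗[ℂ] V) => f z) hbraid
      simpa [Module.End.mul_apply] using h
    have hF0 : ∀ z, F z = 0 := by
      intro z
      have e1 : F (sigma12 σ (sigma23 σ (sigma12 σ z))) = F z := by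
        rw [h12, h23, h12, neg_neg]
      have e2 : F (sigma23 σ (sigma12 σ (sigma23 σ z))) = - F z := by
        rw [h23, h12, h23]
      have h : F z = - F z := by
        calc F z = F (sigma12 σ (sigma23 σ (sigma12 σ z))) := e1.symm
          _ = F (sigma23 σ (sigma12 σ (sigma23 σ z))) := by rw [hb' z]
          _ = - F z := e2
      linear_combination (1 / 2 : ℂ) * h
    have hCz : ∀ x, C x = 0 := by
      intro x
      refine g_nondeg b g hG (C x) fun e => ?_
      rw [← hFtmul, hF0]
    have hLz : ∀ v, L v = 0 := by
      intro v
      refine contract_nondeg b g hG (L v) fun d => ?_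
      have hCv : C (v ⊗ₜ[ℂ] d) = contract g (L v ⊗ₜ[ℂ] d) := by
        simp [hCdef, TensorProduct.map_tmul]
      rw [← hCv, hCz]
    refine LinearMap.ext fun v => Subtype.ext ?_
    simpa [hLdef] using hLz v
  -- Surjectivity via dimension count
  haveI : FiniteDimensional ℂ (V ⊗[ℂ] V) := Module.Finite.tensorProduct ℂ V V
  have hdim : Module.finrank ℂ (V →ₗ[ℂ] ↥S) = Module.finrank ℂ (↥S →ₗ[ℂ] V) := by
    rw [Module.finrank_linearMap, Module.finrank_linearMap, mul_comm]
  have hsurj : Function.Surjective (PhiAux σ g) :=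
    (@LinearMap.injective_iff_surjective_of_finrank_eq_finrank ℂ (V →ₗ[ℂ] ↥S) _ _ _
      (↥S →ₗ[ℂ] V) _ _ _ _ hdim (PhiAux σ g)).mp hinj
  have hbijΦ : Function.Bijective (PhiAux σ g) := ⟨hinj, hsurj⟩
  let e : (V →ₗ[ℂ] ↥S) ≃ {L : V →ₗ[ℂ] V ⊗[ℂ] V // ∀ v, L v ∈ S} :=
    { toFun := fun M => ⟨S.subtype ∘ₗ M, fun v => (M v).2⟩
      invFun := fun L => LinearMap.codRestrict S L.1 L.2
      left_inv := fun M => LinearMap.ext fun v => Subtype.ext rfl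
      right_inv := fun L => Subtype.ext (LinearMap.ext fun v => rfl) }
  have hcomp : (fun L : {L : V →ₗ[ℂ] V ⊗[ℂ] V // ∀ v, L v ∈ S} =>
        (contract g ∘ₗ TensorProduct.map L.1 LinearMap.id) ∘ₗ S.subtype)
      = ⇑(PhiAux σ g) ∘ ⇑e.symm := by
    funext L
    show (contract g ∘ₗ TensorProduct.map L.1 LinearMap.id) ∘ₗ S.subtype
        = PhiAux σ g (LinearMap.codRestrict S L.1 L.2)
    rw [PhiAux_apply]
    rw [LinearMap.subtype_comp_codRestrict]
  rw [hcomp]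
  exact hbijΦ.comp e.symm.bijective
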